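/- Let A be a unital *-algebra over C. Then the following are equivalent: (1) A has sufficiently many positive linear functionals (for every nonzero Hermitian H ∈ A there is a positive linear functional ω with ω(H) ≠ 0); (2) A has a faithful *-representation on a pre-Hilbert space over C; (3) the intersection of all kernels of *-representations of A is {0}. -/

import Mathlib

set_option linter.unusedSectionVars false
set_option linter.unnecessarySeqFocus false
set_option maxHeartbeats 1000000


/-- An ordered ring in the sense of the paper. -/
structure PosCone (R : Type) [CommRing R] (P : Set R) : Prop where
  trichotomy : ∀ a : R, a ∈ P ∨ a = 0 ∨ -a ∈ P
  zero_not_mem : (0 : R) ∉ P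
  not_neg_mem : ∀ a : R, a ∈ P → -a ∉ P
  add_mem : ∀ a b : R, a ∈ P → b ∈ P → a + b ∈ P
  mul_mem : ∀ a b : R, a ∈ P → b ∈ P → a * b ∈ P

/-- The ring `C = R[i] = R(i)` obtained from `R` by adjoining a square root
of `-1`: elements are formal combinations `a + i b`. -/
@[ext] structure Cx (R : Type) : Type where
  re : R
  im : R

namespace Cx
variable {R : Type} [CommRing R]

instance : Zero (Cx R) := ⟨⟨0, 0⟩⟩
instance : One (Cx R) := ⟨⟨1, 0⟩⟩
instance : Add (Cx R) := ⟨fun z w => ⟨z.re + w.re, z.im + w.im⟩⟩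
instance : Neg (Cx R) := ⟨fun z => ⟨-z.re, -z.im⟩⟩
instance : Mul (Cx R) := ⟨fun z w => ⟨z.re * w.re - z.im * w.im, z.re * w.im + z.im * w.re⟩⟩

@[simp] theorem zero_re : (0 : Cx R).re = 0 := rfl
@[simp] theorem zero_im : (0 : Cx R).im = 0 := rfl
@[simp] theorem one_re : (1 : Cx R).re = 1 := rfl
@[simp] theorem one_im : (1 : Cx R).im = 0 := rfl
@[simp] theorem add_re (z w : Cx R) : (z + w).re = z.re + w.re := rfl
@[simp] theorem add_im (z w : Cx R) : (z + w).im = z.im + w.im := rfl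
@[simp] theorem neg_re (z : Cx R) : (-z).re = -z.re := rfl
@[simp] theorem neg_im (z : Cx R) : (-z).im = -z.im := rfl
@[simp] theorem mul_re (z w : Cx R) : (z * w).re = z.re * w.re - z.im * w.im := rfl
@[simp] theorem mul_im (z w : Cx R) : (z * w).im = z.re * w.im + z.im * w.re := rfl

instance : CommRing (Cx R) where
  add_assoc a b c := by ext <;> simp <;> ring
  zero_add a := by ext <;> simp
  add_zero a := by ext <;> simp
  add_comm a b := by ext <;> simp <;> ring
  left_distrib a b c := by ext <;> simp <;> ring
  right_distrib a b c := by ext <;> simp <;> ring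
  zero_mul a := by ext <;> simp
  mul_zero a := by ext <;> simp
  mul_assoc a b c := by ext <;> simp <;> ring
  one_mul a := by ext <;> simp
  mul_one a := by ext <;> simp
  neg_add_cancel a := by ext <;> simp
  mul_comm a b := by ext <;> simp <;> ring
  nsmul := nsmulRec
  zsmul := zsmulRec

/-- Complex conjugation `a + ib ↦ a - ib` on `C = R[i]`. -/
def conj (z : Cx R) : Cx R := ⟨z.re, -z.im⟩

/-- The imaginary unit `i` of `C = R[i]`. -/
def I : Cx R := ⟨0, 1⟩

end Cx

/-- The positive elements of `C = R[i]`: the elements of `P ⊆ R ⊆ C`. -/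
def CxPos {R : Type} [CommRing R] (P : Set R) : Set (Cx R) :=
  {z | z.im = 0 ∧ z.re ∈ P}

/-- The nonnegative elements of `C = R[i]`: elements of `P ∪ {0} ⊆ R ⊆ C`. -/
def CxNonneg {R : Type} [CommRing R] (P : Set R) : Set (Cx R) :=
  {z | z.im = 0 ∧ (z.re = 0 ∨ z.re ∈ P)}

/-- A pre-Hilbert space over `K` (with conjugation `conj` and positivity set
`Pos`): a `K`-module with a Hermitian, positive-definite inner product which
is `K`-linear in the second argument. -/
structure PreHilbert (K : Type) [CommRing K] (conj : K → K) (Pos : Set K)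
    (H : Type) [AddCommGroup H] [Module K H] : Type where
  inner : H → H → K
  inner_add_right : ∀ φ ψ χ : H, inner φ (ψ + χ) = inner φ ψ + inner φ χ
  inner_smul_right : ∀ (z : K) (φ ψ : H), inner φ (z • ψ) = z * inner φ ψ
  inner_conj : ∀ φ ψ : H, inner φ ψ = conj (inner ψ φ)
  inner_pos : ∀ φ : H, φ ≠ 0 → inner φ φ ∈ Pos

/-- A `*`-algebra over `K`: an associative unital `K`-algebra together with an
anti-linear involutive anti-automorphism `star`. -/
structure StarAlgebra (K : Type) [CommRing K] (conj : K → K)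
    (A : Type) [Ring A] [Algebra K A] : Type where
  star : A → A
  star_add : ∀ a b : A, star (a + b) = star a + star b
  star_mul : ∀ a b : A, star (a * b) = star b * star a
  star_star : ∀ a : A, star (star a) = a
  star_smul : ∀ (z : K) (a : A), star (z • a) = conj z • star a

/-- A `K`-linear functional `ω` on a `*`-algebra is positive if
`ω(a*a) ≥ 0` for all `a`. -/
def StarAlgebra.IsPositive {K : Type} [CommRing K] {conj : K → K}
    {A : Type} [Ring A] [Algebra K A] (sa : StarAlgebra K conj A)
    (Nonneg : Set K) (ω : A →ₗ[K] K) : Prop :=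
  ∀ a : A, ω (sa.star a * a) ∈ Nonneg

/-- A `*`-representation of a `*`-algebra `A` over `C = R[i]` on a pre-Hilbert
space over `C`: a `*`-homomorphism of `A` into the adjointable operators. -/
structure StarRep (R : Type) [CommRing R] (P : Set R)
    (A : Type) [Ring A] [Algebra (Cx R) A] (sa : StarAlgebra (Cx R) Cx.conj A) :
    Type 1 where
  H : Type
  [acg : AddCommGroup H]
  [mod : Module (Cx R) H]
  hp : PreHilbert (Cx R) Cx.conj (CxPos P) H
  π : A → H → H
  π_add : ∀ a b : A, π (a + b) = fun φ => π a φ + π b φ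
  π_smul : ∀ (z : Cx R) (a : A), π (z • a) = fun φ => z • π a φ
  π_mul : ∀ a b : A, π (a * b) = fun φ => π a (π b φ)
  π_one : π 1 = id
  map_add : ∀ (a : A) (φ ψ : H), π a (φ + ψ) = π a φ + π a ψ
  map_smul : ∀ (a : A) (z : Cx R) (φ : H), π a (z • φ) = z • π a φ
  adjoint : ∀ (a : A) (φ ψ : H), hp.inner (π a φ) ψ = hp.inner φ (π (sa.star a) ψ)

attribute [instance] StarRep.acg StarRep.mod


/-! ### Preliminary lemmas -/

section Prelim
variable {R : Type} [CommRing R] [Nontrivial R] {P : Set R}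

theorem PosCone.one_mem (hP : PosCone R P) : (1 : R) ∈ P := by
  rcases hP.trichotomy 1 with h | h | h
  · exact h
  · exact absurd h one_ne_zero
  · have h1 : (-1 : R) * (-1 : R) ∈ P := hP.mul_mem _ _ h h
    rw [neg_mul_neg, one_mul] at h1
    exact absurd h (hP.not_neg_mem 1 h1)

theorem PosCone.two_mem (hP : PosCone R P) : (2 : R) ∈ P := by
  have := hP.add_mem 1 1 hP.one_mem hP.one_mem
  rwa [one_add_one_eq_two] at this

theorem PosCone.sq_mem (hP : PosCone R P) {a : R} (ha : a ≠ 0) : a * a ∈ P := by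
  rcases hP.trichotomy a with h | h | h
  · exact hP.mul_mem _ _ h h
  · exact absurd h ha
  · have := hP.mul_mem _ _ h h
    rwa [neg_mul_neg] at this

theorem PosCone.nonneg_add (hP : PosCone R P) {a b : R} (ha : a = 0 ∨ a ∈ P)
    (hb : b = 0 ∨ b ∈ P) : a + b = 0 ∨ a + b ∈ P := by
  rcases ha with rfl | ha
  · simpa using hb
  · rcases hb with rfl | hb
    · simp [ha]
    · exact Or.inr (hP.add_mem _ _ ha hb)

theorem PosCone.sum_sq_zero (hP : PosCone R P) {a b : R} (h : a * a + b * b = 0) :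
    a = 0 ∧ b = 0 := by
  by_cases ha : a = 0
  · subst ha
    refine ⟨rfl, ?_⟩
    by_contra hb
    have := hP.sq_mem hb
    rw [show b * b = 0 by linear_combination h] at this
    exact hP.zero_not_mem this
  · exfalso
    by_cases hb : b = 0
    · have := hP.sq_mem ha
      rw [show a * a = 0 by linear_combination h - b * hb] at this
      exact hP.zero_not_mem this
    · have := hP.add_mem _ _ (hP.sq_mem ha) (hP.sq_mem hb)
      rw [h] at this
      exact hP.zero_not_mem this

theorem PosCone.two_cancel (hP : PosCone R P) {a : R} (h : 2 * a = 0) : a = 0 := by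
  by_contra ha
  rcases hP.trichotomy a with h1 | h1 | h1
  · have := hP.mul_mem _ _ hP.two_mem h1
    rw [h] at this
    exact hP.zero_not_mem this
  · exact ha h1
  · have := hP.mul_mem _ _ hP.two_mem h1
    rw [show 2 * -a = -(2*a) by ring, h, neg_zero] at this
    exact hP.zero_not_mem this

namespace Cx

@[simp] theorem conj_re (z : Cx R) : (conj z).re = z.re := rfl
@[simp] theorem conj_im (z : Cx R) : (conj z).im = -z.im := rfl

@[simp] theorem conj_zero : conj (0 : Cx R) = 0 := by ext <;> simp
@[simp] theorem conj_add (z w : Cx R) : conj (z + w) = conj z + conj w := by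
  ext <;> simp [conj] <;> ring
@[simp] theorem conj_mul (z w : Cx R) : conj (z * w) = conj z * conj w := by
  ext <;> simp [conj] <;> ring
@[simp] theorem conj_conj (z : Cx R) : conj (conj z) = z := by ext <;> simp

@[simp] theorem I_re : (I : Cx R).re = 0 := rfl
@[simp] theorem I_im : (I : Cx R).im = 1 := rfl

theorem I_mul_I : (I : Cx R) * I = -1 := by ext <;> simp

theorem two_cancel (hP : PosCone R P) {z : Cx R} (h : z + z = 0) : z = 0 := by
  have hre : 2 * z.re = 0 := by
    have := congrArg Cx.re h; simp at this; linear_combination this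
  have him : 2 * z.im = 0 := by
    have := congrArg Cx.im h; simp at this; linear_combination this
  ext
  · exact hP.two_cancel hre
  · exact hP.two_cancel him

/-- The conjugation as an additive monoid hom. -/
def conjHom : Cx R →+ Cx R where
  toFun := conj
  map_zero' := conj_zero
  map_add' := conj_add

theorem norm_sq_re (z : Cx R) : (conj z * z).re = z.re * z.re + z.im * z.im := by
  simp only [mul_re, conj_re, conj_im]; ring
theorem norm_sq_im (z : Cx R) : (conj z * z).im = 0 := by
  simp only [mul_im, conj_re, conj_im]; ring

end Cx

theorem CxNonneg.zero_mem : (0 : Cx R) ∈ CxNonneg P := ⟨rfl, Or.inl rfl⟩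

theorem CxNonneg.add_mem (hP : PosCone R P) {z w : Cx R} (hz : z ∈ CxNonneg P)
    (hw : w ∈ CxNonneg P) : z + w ∈ CxNonneg P := by
  exact ⟨by simp [hz.1, hw.1], hP.nonneg_add hz.2 hw.2⟩

theorem CxPos.toNonneg {z : Cx R} (hz : z ∈ CxPos P) : z ∈ CxNonneg P :=
  ⟨hz.1, Or.inr hz.2⟩

theorem CxNonneg.toPos {z : Cx R} (hz : z ∈ CxNonneg P) (h0 : z ≠ 0) :
    z ∈ CxPos P := by
  refine ⟨hz.1, ?_⟩
  rcases hz.2 with h | h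
  · exact absurd (by ext <;> simp [h, hz.1]) h0
  · exact h

theorem CxPos.add_mem (hP : PosCone R P) {z w : Cx R} (hz : z ∈ CxPos P)
    (hw : w ∈ CxPos P) : z + w ∈ CxPos P :=
  ⟨by simp [hz.1, hw.1], hP.add_mem _ _ hz.2 hw.2⟩

theorem CxPos.ne_zero (hP : PosCone R P) {z : Cx R} (hz : z ∈ CxPos P) : z ≠ 0 := by
  rintro rfl
  exact hP.zero_not_mem hz.2

end Prelim


/-! ### Positive functionals -/

section PosFunc
variable {R : Type} [CommRing R] [Nontrivial R] {P : Set R}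
variable {A : Type} [Ring A] [Algebra (Cx R) A] (sa : StarAlgebra (Cx R) Cx.conj A)

theorem StarAlgebra.star_one' : sa.star 1 = 1 := by
  have h : ∀ a : A, sa.star 1 * a = a := by
    intro a
    calc sa.star 1 * a = sa.star 1 * sa.star (sa.star a) := by rw [sa.star_star]
    _ = sa.star (sa.star a * 1) := by rw [sa.star_mul]
    _ = a := by rw [mul_one, sa.star_star]
  have := h 1
  rwa [mul_one] at this

variable {sa}
variable {ω : A →ₗ[Cx R] Cx R}

theorem sum_sq_mem (hP : PosCone R P) {w : Cx R} (hw : w ≠ 0) :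
    w.re * w.re + w.im * w.im ∈ P := by
  by_cases h1 : w.re = 0
  · have h2 : w.im ≠ 0 := fun h2 => hw (by ext <;> simp [h1, h2])
    have := hP.sq_mem h2
    rw [show w.re * w.re + w.im * w.im = w.im * w.im by rw [h1]; ring]
    exact this
  · by_cases h2 : w.im = 0
    · rw [show w.re * w.re + w.im * w.im = w.re * w.re by rw [h2]; ring]
      exact hP.sq_mem h1
    · exact hP.add_mem _ _ (hP.sq_mem h1) (hP.sq_mem h2)

/-- Positivity implies Hermitian symmetry of the induced sesquilinear form. -/
theorem IsPositive.hermitian (hω : sa.IsPositive (CxNonneg P) ω) (a b : A) :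
    ω (sa.star a * b) = Cx.conj (ω (sa.star b * a)) := by
  set x := ω (sa.star a * b) with hx
  set y := ω (sa.star b * a) with hy
  have key1 : sa.star (a + b) * (a + b)
      = sa.star a * a + sa.star a * b + sa.star b * a + sa.star b * b := by
    rw [sa.star_add, add_mul, mul_add, mul_add]; abel
  have e1 := (hω (a + b)).1
  rw [key1] at e1
  simp only [map_add, Cx.add_im, (hω a).1, (hω b).1, ← hx, ← hy] at e1
  -- e1 : 0 + x.im + y.im + 0 = 0
  have key2 : sa.star (a + (Cx.I : Cx R) • b) * (a + (Cx.I : Cx R) • b)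
      = sa.star a * a + (Cx.I : Cx R) • (sa.star a * b) + Cx.conj (Cx.I : Cx R) • (sa.star b * a)
        + (Cx.conj (Cx.I : Cx R) * (Cx.I : Cx R)) • (sa.star b * b) := by
    rw [sa.star_add, sa.star_smul, add_mul, mul_add, mul_add, smul_mul_assoc,
      smul_mul_assoc, mul_smul_comm, mul_smul_comm, smul_smul]
    abel
  have e2 := (hω (a + (Cx.I : Cx R) • b)).1
  rw [key2] at e2
  simp only [map_add, map_smul, smul_eq_mul, Cx.add_im, Cx.mul_im, Cx.mul_re,
    Cx.I_re, Cx.I_im, Cx.conj_re, Cx.conj_im, (hω a).1, (hω b).1, ← hx, ← hy] at e2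
  ext
  · simp only [Cx.conj_re]; linear_combination e2
  · simp only [Cx.conj_im]; linear_combination e1

/-- The null lemma: if `ω((a)*(a)) = 0` then `ω(b* a) = 0` for every `b`. -/
theorem IsPositive.null (hω : sa.IsPositive (CxNonneg P) ω) (hP : PosCone R P)
    {a : A} (ha : ω (sa.star a * a) = 0)
    (b : A) : ω (sa.star b * a) = 0 := by
  set w := ω (sa.star b * a) with hwdef
  by_contra hw
  have hx : ω (sa.star a * b) = Cx.conj w := IsPositive.hermitian hω a b
  set c := ω (sa.star b * b) with hcdef
  have hc : c.im = 0 := (hω b).1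
  have hc2 : c.re = 0 ∨ c.re ∈ P := (hω b).2
  set lam : Cx R := ⟨-(c.re + 1), 0⟩ with hlam
  have key : sa.star (w • b + lam • a) * (w • b + lam • a)
      = (Cx.conj lam * lam) • (sa.star a * a) + (Cx.conj lam * w) • (sa.star a * b)
        + (Cx.conj w * lam) • (sa.star b * a) + (Cx.conj w * w) • (sa.star b * b) := by
    rw [sa.star_add, sa.star_smul, sa.star_smul, add_mul, mul_add, mul_add,
      smul_mul_assoc, smul_mul_assoc, smul_mul_assoc, smul_mul_assoc,
      mul_smul_comm, mul_smul_comm, mul_smul_comm, mul_smul_comm,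
      smul_smul, smul_smul, smul_smul, smul_smul]
    abel
  have val := hω (w • b + lam • a)
  rw [key] at val
  simp only [map_add, map_smul, smul_eq_mul, ha, hx, mul_zero, ← hwdef, ← hcdef] at val
  set s : R := w.re * w.re + w.im * w.im with hs
  have hsP : s ∈ P := sum_sq_mem hP hw
  have hc2P : c.re + 2 ∈ P := by
    rcases hc2 with h | h
    · rw [h, zero_add]; exact hP.two_mem
    · exact hP.add_mem _ _ h hP.two_mem
  have hval : Cx.conj lam * w * Cx.conj w + (Cx.conj w * lam * w + Cx.conj w * w * c)
      = ⟨-(s * (c.re + 2)), 0⟩ := by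
    ext
    · simp only [Cx.add_re, Cx.mul_re, Cx.mul_im, Cx.conj_re, Cx.conj_im, hlam]
      simp only [neg_neg, neg_zero]
      linear_combination (0:R) * hc
    · simp only [Cx.add_im, Cx.mul_re, Cx.mul_im, Cx.conj_re, Cx.conj_im, hlam]
      simp only [neg_neg, neg_zero]
      linear_combination (w.re*w.re+w.im*w.im) * hc
  rw [show (0 : Cx R) + Cx.conj lam * w * Cx.conj w + Cx.conj w * lam * w
      + Cx.conj w * w * c
      = Cx.conj lam * w * Cx.conj w + (Cx.conj w * lam * w + Cx.conj w * w * c) by ring,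
    hval] at val
  have hp : s * (c.re + 2) ∈ P := hP.mul_mem _ _ hsP hc2P
  rcases val.2 with h | h
  · rw [show -(s * (c.re + 2)) = (0:R) ↔ s * (c.re + 2) = 0 from neg_eq_zero] at h
    rw [h] at hp
    exact hP.zero_not_mem hp
  · exact hP.not_neg_mem _ hp h

end PosFunc


/-! ### The GNS construction -/

section GNS
variable {R : Type} [CommRing R] [Nontrivial R] {P : Set R}
variable {A : Type} [Ring A] [Algebra (Cx R) A] {sa : StarAlgebra (Cx R) Cx.conj A}

theorem StarAlgebra.star_zero' (sa : StarAlgebra (Cx R) Cx.conj A) :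
    sa.star 0 = 0 := by
  have := sa.star_add 0 0
  rw [add_zero] at this
  exact right_eq_add.mp this

theorem StarAlgebra.star_sub' (sa : StarAlgebra (Cx R) Cx.conj A) (a b : A) :
    sa.star (a - b) = sa.star a - sa.star b := by
  have h : sa.star (a - b) + sa.star b = sa.star a := by
    rw [← sa.star_add, sub_add_cancel]
  linear_combination (norm := abel) h

/-- The null space of a positive linear functional. -/
def nullSpace (sa : StarAlgebra (Cx R) Cx.conj A) (ω : A →ₗ[Cx R] Cx R) :
    Submodule (Cx R) A where
  carrier := {x | ∀ b : A, ω (sa.star b * x) = 0}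
  zero_mem' := by intro b; rw [mul_zero, map_zero]
  add_mem' := by
    intro x y hx hy b
    rw [mul_add, map_add, hx b, hy b, add_zero]
  smul_mem' := by
    intro z x hx b
    rw [mul_smul_comm, map_smul, hx b, smul_zero]

theorem mem_nullSpace_iff {ω : A →ₗ[Cx R] Cx R} (hω : sa.IsPositive (CxNonneg P) ω)
    (hP : PosCone R P) {x : A} :
    x ∈ nullSpace sa ω ↔ ω (sa.star x * x) = 0 :=
  ⟨fun h => h x, fun h b => IsPositive.null hω hP h b⟩

theorem nullSpace_omega {ω : A →ₗ[Cx R] Cx R} {x : A} (hx : x ∈ nullSpace sa ω) :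
    ω x = 0 := by
  have := hx 1
  rwa [sa.star_one', one_mul] at this

theorem nullSpace_mul_mem {ω : A →ₗ[Cx R] Cx R} {x : A} (hx : x ∈ nullSpace sa ω)
    (c : A) : c * x ∈ nullSpace sa ω := by
  intro b
  rw [show sa.star b * (c * x) = sa.star (sa.star c * b) * x by
    rw [sa.star_mul, sa.star_star, mul_assoc]]
  exact hx _

theorem omega_star {ω : A →ₗ[Cx R] Cx R} (hω : sa.IsPositive (CxNonneg P) ω) (a : A) :
    ω (sa.star a) = Cx.conj (ω a) := by
  have := IsPositive.hermitian hω a 1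
  rwa [mul_one, sa.star_one', one_mul] at this

/-- Congruence of the sesquilinear form with respect to the null space. -/
theorem gns_congr {ω : A →ₗ[Cx R] Cx R} (hω : sa.IsPositive (CxNonneg P) ω)
    {a₁ b₁ a₂ b₂ : A} (ha : a₁ - a₂ ∈ nullSpace sa ω) (hb : b₁ - b₂ ∈ nullSpace sa ω) :
    ω (sa.star a₁ * b₁) = ω (sa.star a₂ * b₂) := by
  have h1 : ω (sa.star a₁ * b₁) = ω (sa.star a₁ * b₂) := by
    have h := hb a₁
    rw [mul_sub, map_sub, sub_eq_zero] at h
    exact h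
  have h2 : ω (sa.star a₁ * b₂) = ω (sa.star a₂ * b₂) := by
    have h := ha b₂
    have h' : ω (sa.star b₂ * (a₁ - a₂)) = 0 := h
    have h'' : ω (sa.star (a₁ - a₂) * b₂) = 0 := by
      rw [IsPositive.hermitian hω, h', Cx.conj_zero]
    rw [sa.star_sub', sub_mul, map_sub, sub_eq_zero] at h''
    exact h''
  rw [h1, h2]

/-- The inner product on the GNS space. -/
noncomputable def gnsInner {ω : A →ₗ[Cx R] Cx R} (hω : sa.IsPositive (CxNonneg P) ω)
    (φ ψ : A ⧸ nullSpace sa ω) : Cx R :=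
  Quotient.liftOn₂ φ ψ (fun a b => ω (sa.star a * b)) fun a₁ b₁ a₂ b₂ ha hb =>
    gns_congr hω ((Submodule.quotientRel_def _).mp ha) ((Submodule.quotientRel_def _).mp hb)

@[simp] theorem gnsInner_mk {ω : A →ₗ[Cx R] Cx R} (hω : sa.IsPositive (CxNonneg P) ω)
    (a b : A) :
    gnsInner hω (Submodule.Quotient.mk a) (Submodule.Quotient.mk b)
      = ω (sa.star a * b) := rfl

/-- The GNS action. -/
noncomputable def gnsPi (sa : StarAlgebra (Cx R) Cx.conj A) (ω : A →ₗ[Cx R] Cx R)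
    (x : A) : (A ⧸ nullSpace sa ω) →ₗ[Cx R] (A ⧸ nullSpace sa ω) :=
  Submodule.mapQ _ _ (LinearMap.mulLeft (Cx R) x) (by
    intro y hy
    simp only [Submodule.mem_comap, LinearMap.mulLeft_apply]
    exact nullSpace_mul_mem hy x)

@[simp] theorem gnsPi_mk {ω : A →ₗ[Cx R] Cx R} (x b : A) :
    gnsPi sa ω x (Submodule.Quotient.mk b) = Submodule.Quotient.mk (x * b) := rfl

/-- The GNS representation associated to a positive linear functional. -/
noncomputable def gnsRep (hP : PosCone R P) (sa : StarAlgebra (Cx R) Cx.conj A)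
    (ω : A →ₗ[Cx R] Cx R) (hω : sa.IsPositive (CxNonneg P) ω) : StarRep R P A sa where
  H := A ⧸ nullSpace sa ω
  acg := inferInstance
  mod := inferInstance
  hp :=
  { inner := gnsInner hω
    inner_add_right := by
      rintro ⟨φ⟩ ⟨ψ⟩ ⟨χ⟩
      show gnsInner hω (Submodule.Quotient.mk φ)
        (Submodule.Quotient.mk ψ + Submodule.Quotient.mk χ) = _
      rw [← Submodule.Quotient.mk_add]
      show ω _ = ω _ + ω _
      rw [mul_add, map_add]
    inner_smul_right := by
      rintro z ⟨φ⟩ ⟨ψ⟩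
      show gnsInner hω (Submodule.Quotient.mk φ) (z • Submodule.Quotient.mk ψ) = _
      rw [← Submodule.Quotient.mk_smul]
      show ω _ = z * ω _
      rw [mul_smul_comm, map_smul, smul_eq_mul]
    inner_conj := by
      rintro ⟨φ⟩ ⟨ψ⟩
      exact IsPositive.hermitian hω φ ψ
    inner_pos := by
      rintro ⟨φ⟩ hφ
      have hm : ¬ (φ ∈ nullSpace sa ω) := by
        intro h
        exact hφ ((Submodule.Quotient.mk_eq_zero _).mpr h)
      refine CxNonneg.toPos (hω φ) ?_
      intro h0
      exact hm ((mem_nullSpace_iff hω hP).mpr h0) }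
  π := fun x => gnsPi sa ω x
  π_add := by
    intro a b
    funext φ
    obtain ⟨c, rfl⟩ := Submodule.Quotient.mk_surjective _ φ
    simp only [gnsPi_mk]
    rw [add_mul, Submodule.Quotient.mk_add]
  π_smul := by
    intro z a
    funext φ
    obtain ⟨c, rfl⟩ := Submodule.Quotient.mk_surjective _ φ
    simp only [gnsPi_mk]
    rw [smul_mul_assoc, Submodule.Quotient.mk_smul]
  π_mul := by
    intro a b
    funext φ
    obtain ⟨c, rfl⟩ := Submodule.Quotient.mk_surjective _ φ
    simp only [gnsPi_mk]
    rw [mul_assoc]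
  π_one := by
    funext φ
    obtain ⟨c, rfl⟩ := Submodule.Quotient.mk_surjective _ φ
    simp only [gnsPi_mk, one_mul, id_eq]
  map_add := fun a φ ψ => (gnsPi sa ω a).map_add φ ψ
  map_smul := fun a z φ => (gnsPi sa ω a).map_smul z φ
  adjoint := by
    rintro a ⟨φ⟩ ⟨ψ⟩
    show gnsInner hω (gnsPi sa ω a (Submodule.Quotient.mk φ)) (Submodule.Quotient.mk ψ)
      = gnsInner hω (Submodule.Quotient.mk φ) (gnsPi sa ω (sa.star a) (Submodule.Quotient.mk ψ))
    rw [gnsPi_mk, gnsPi_mk]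
    show ω _ = ω _
    rw [sa.star_mul, mul_assoc]

theorem gnsRep_faithful_at (hP : PosCone R P) {ω : A →ₗ[Cx R] Cx R}
    (hω : sa.IsPositive (CxNonneg P) ω) {a : A} (ha : ω a ≠ 0) :
    ∃ φ : (gnsRep hP sa ω hω).H, (gnsRep hP sa ω hω).π a φ ≠ 0 := by
  refine ⟨Submodule.Quotient.mk 1, ?_⟩
  show gnsPi sa ω a (Submodule.Quotient.mk 1) ≠ 0
  rw [gnsPi_mk, mul_one]
  intro h
  exact ha (nullSpace_omega ((Submodule.Quotient.mk_eq_zero _).mp h))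

end GNS

/-! ### Generalities on pre-Hilbert spaces -/

section PH
variable {R : Type} [CommRing R] [Nontrivial R] {P : Set R}
variable {H : Type} [AddCommGroup H] [Module (Cx R) H]
variable (hp : PreHilbert (Cx R) Cx.conj (CxPos P) H)

theorem PreHilbert.inner_zero_right (φ : H) : hp.inner φ 0 = 0 := by
  have := hp.inner_add_right φ 0 0
  rw [add_zero] at this
  exact (right_eq_add.mp this)

theorem PreHilbert.inner_zero_left (φ : H) : hp.inner 0 φ = 0 := by
  rw [hp.inner_conj, hp.inner_zero_right, Cx.conj_zero]

theorem PreHilbert.inner_add_left (φ ψ χ : H) :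
    hp.inner (φ + ψ) χ = hp.inner φ χ + hp.inner ψ χ := by
  rw [hp.inner_conj, hp.inner_add_right, Cx.conj_add, ← hp.inner_conj, ← hp.inner_conj]

theorem PreHilbert.inner_smul_left (z : Cx R) (φ ψ : H) :
    hp.inner (z • φ) ψ = Cx.conj z * hp.inner φ ψ := by
  rw [hp.inner_conj, hp.inner_smul_right, Cx.conj_mul, ← hp.inner_conj]

end PH

open scoped DirectSum

section Reps
variable {R : Type} [CommRing R] [Nontrivial R] {P : Set R}
variable {A : Type} [Ring A] [Algebra (Cx R) A] {sa : StarAlgebra (Cx R) Cx.conj A}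

theorem StarRep.pi_zero (ρ : StarRep R P A sa) (a : A) : ρ.π a 0 = 0 := by
  have := ρ.map_add a 0 0
  rw [add_zero] at this
  exact (right_eq_add.mp this)

/-- The trivial (zero) representation. -/
def trivialRep (sa : StarAlgebra (Cx R) Cx.conj A) : StarRep R P A sa where
  H := PUnit
  acg := inferInstance
  mod := inferInstance
  hp :=
  { inner := fun _ _ => 0
    inner_add_right := fun _ _ _ => by simp
    inner_smul_right := fun _ _ _ => by simp
    inner_conj := fun _ _ => Cx.conj_zero.symm
    inner_pos := fun φ hφ => absurd (Subsingleton.elim φ 0) hφ }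
  π := fun _ φ => φ
  π_add := fun _ _ => funext fun φ => Subsingleton.elim _ _
  π_smul := fun _ _ => funext fun φ => Subsingleton.elim _ _
  π_mul := fun _ _ => rfl
  π_one := rfl
  map_add := fun _ φ ψ => Subsingleton.elim _ _
  map_smul := fun _ _ _ => Subsingleton.elim _ _
  adjoint := fun _ _ _ => rfl

/-! ### Direct sums of representations -/

section DS
variable {ι : Type} [DecidableEq ι] (F : ι → StarRep R P A sa)
variable [∀ (i : ι) (x : (F i).H), Decidable (x ≠ 0)]

/-- The inner product on the direct sum. -/
noncomputable def dsInner (φ ψ : ⨁ i, (F i).H) : Cx R :=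
  ∑ i ∈ (DFinsupp.support φ ∪ DFinsupp.support ψ),
    (F i).hp.inner (φ i) (ψ i)

theorem dsInner_eq_sum {φ ψ : ⨁ i, (F i).H} {s : Finset ι}
    (hs : DFinsupp.support φ ∪ DFinsupp.support ψ ⊆ s) :
    dsInner F φ ψ = ∑ i ∈ s, (F i).hp.inner (φ i) (ψ i) := by
  refine Finset.sum_subset hs fun i _ hi => ?_
  have hφ : φ i = 0 := by
    have : i ∉ DFinsupp.support φ := fun h => hi (Finset.mem_union_left _ h)
    exact DFinsupp.notMem_support_iff.mp this
  rw [hφ, (F i).hp.inner_zero_left]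

/-- The action on the direct sum. -/
noncomputable def dsPi (a : A) (φ : ⨁ i, (F i).H) : ⨁ i, (F i).H :=
  DFinsupp.mapRange (fun i ξ => (F i).π a ξ) (fun i => (F i).pi_zero a) φ

@[simp] theorem dsPi_apply (a : A) (φ : ⨁ i, (F i).H) (i : ι) :
    dsPi F a φ i = (F i).π a (φ i) :=
  DFinsupp.mapRange_apply _ _ φ i

theorem dsPi_support (a : A) (φ : ⨁ i, (F i).H) :
    DFinsupp.support (dsPi F a φ) ⊆ DFinsupp.support φ :=
  DFinsupp.support_mapRange

/-- The direct sum of a family of `*`-representations. -/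
noncomputable def dsRep (hPP : PosCone R P) : StarRep R P A sa where
  H := ⨁ i, (F i).H
  acg := inferInstance
  mod := inferInstance
  hp :=
  { inner := dsInner F
    inner_add_right := by
      intro φ ψ χ
      set s : Finset ι := DFinsupp.support φ ∪ DFinsupp.support ψ ∪ DFinsupp.support χ
        ∪ DFinsupp.support (ψ + χ) with hs
      have h1 : DFinsupp.support φ ∪ DFinsupp.support (ψ + χ) ⊆ s := by
        intro i hi; simp only [hs, Finset.mem_union] at hi ⊢; tauto
      have h2 : DFinsupp.support φ ∪ DFinsupp.support ψ ⊆ s := by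
        intro i hi; simp only [hs, Finset.mem_union] at hi ⊢; tauto
      have h3 : DFinsupp.support φ ∪ DFinsupp.support χ ⊆ s := by
        intro i hi; simp only [hs, Finset.mem_union] at hi ⊢; tauto
      rw [dsInner_eq_sum F h1, dsInner_eq_sum F h2, dsInner_eq_sum F h3,
        ← Finset.sum_add_distrib]
      exact Finset.sum_congr rfl fun i _ => by
        rw [DirectSum.add_apply, (F i).hp.inner_add_right]
    inner_smul_right := by
      intro z φ ψ
      set s : Finset ι := DFinsupp.support φ ∪ DFinsupp.support ψ
        ∪ DFinsupp.support (z • ψ) with hs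
      have h1 : DFinsupp.support φ ∪ DFinsupp.support (z • ψ) ⊆ s := by
        intro i hi; simp only [hs, Finset.mem_union] at hi ⊢; tauto
      have h2 : DFinsupp.support φ ∪ DFinsupp.support ψ ⊆ s := by
        intro i hi; simp only [hs, Finset.mem_union] at hi ⊢; tauto
      rw [dsInner_eq_sum F h1, dsInner_eq_sum F h2, Finset.mul_sum]
      exact Finset.sum_congr rfl fun i _ => by
        rw [DFinsupp.smul_apply, (F i).hp.inner_smul_right]
    inner_conj := by
      intro φ ψ
      have h1 : DFinsupp.support ψ ∪ DFinsupp.support φ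
          ⊆ DFinsupp.support φ ∪ DFinsupp.support ψ := by
        rw [Finset.union_comm]
      calc dsInner F φ ψ
          = ∑ i ∈ DFinsupp.support φ ∪ DFinsupp.support ψ,
            Cx.conj ((F i).hp.inner (ψ i) (φ i)) :=
          Finset.sum_congr rfl fun i _ => (F i).hp.inner_conj (φ i) (ψ i)
        _ = Cx.conj (∑ i ∈ DFinsupp.support φ ∪ DFinsupp.support ψ,
            (F i).hp.inner (ψ i) (φ i)) :=
          (map_sum Cx.conjHom _ _).symm
        _ = Cx.conj (dsInner F ψ φ) := by rw [dsInner_eq_sum F h1]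
    inner_pos := by
      intro φ hφ
      have hne : DFinsupp.support φ ≠ ∅ := fun h => hφ (DFinsupp.support_eq_empty.mp h)
      rw [dsInner, Finset.union_self]
      exact Finset.sum_induction_nonempty _ (fun z => z ∈ CxPos P)
        (fun a b ha hb => CxPos.add_mem hPP ha hb)
        (Finset.nonempty_of_ne_empty hne)
        (fun i hi => (F i).hp.inner_pos (φ i) (DFinsupp.mem_support_iff.mp hi)) }
  π := dsPi F
  π_add := by
    intro a b
    funext φ
    refine DFinsupp.ext fun i => ?_
    simp only [dsPi_apply, DirectSum.add_apply, (F i).π_add]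
  π_smul := by
    intro z a
    funext φ
    refine DFinsupp.ext fun i => ?_
    simp only [dsPi_apply, DFinsupp.smul_apply, DirectSum.smul_apply, (F i).π_smul]
  π_mul := by
    intro a b
    funext φ
    refine DFinsupp.ext fun i => ?_
    simp only [dsPi_apply, (F i).π_mul]
  π_one := by
    funext φ
    refine DFinsupp.ext fun i => ?_
    simp only [dsPi_apply, (F i).π_one, id_eq]
  map_add := by
    intro a φ ψ
    refine DFinsupp.ext fun i => ?_
    simp only [dsPi_apply, DirectSum.add_apply, (F i).map_add]
  map_smul := by
    intro a z φ
    refine DFinsupp.ext fun i => ?_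
    simp only [dsPi_apply, DFinsupp.smul_apply, DirectSum.smul_apply, (F i).map_smul]
  adjoint := by
    intro a φ ψ
    set s : Finset ι := DFinsupp.support (dsPi F a φ) ∪ DFinsupp.support φ
      ∪ DFinsupp.support ψ ∪ DFinsupp.support (dsPi F (sa.star a) ψ) with hs
    have h1 : DFinsupp.support (dsPi F a φ) ∪ DFinsupp.support ψ ⊆ s := by
      intro i hi; simp only [hs, Finset.mem_union] at hi ⊢; tauto
    have h2 : DFinsupp.support φ ∪ DFinsupp.support (dsPi F (sa.star a) ψ) ⊆ s := by
      intro i hi; simp only [hs, Finset.mem_union] at hi ⊢; tauto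
    show dsInner F (dsPi F a φ) ψ = dsInner F φ (dsPi F (sa.star a) ψ)
    rw [dsInner_eq_sum F h1, dsInner_eq_sum F h2]
    exact Finset.sum_congr rfl fun i _ => by
      rw [dsPi_apply, dsPi_apply, (F i).adjoint]

end DS
end Reps

section Assemble
variable {R : Type} [CommRing R] [Nontrivial R] {P : Set R}
variable {A : Type} [Ring A] [Algebra (Cx R) A] {sa : StarAlgebra (Cx R) Cx.conj A}

theorem Cx.I_mul_eq_zero {z : Cx R} (h : (Cx.I : Cx R) * z = 0) : z = 0 := by
  have h1 := congrArg Cx.re h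
  have h2 := congrArg Cx.im h
  simp only [Cx.mul_re, Cx.mul_im, Cx.I_re, Cx.I_im, Cx.zero_re, Cx.zero_im,
    zero_mul, one_mul, zero_sub, zero_add] at h1 h2
  ext
  · exact h2
  · exact neg_eq_zero.mp h1

/-- A separating family of representations yields a faithful representation. -/
theorem sep_to_faithful (hP : PosCone R P)
    (hsep : ∀ a : A, a ≠ 0 → ∃ ρ : StarRep R P A sa, ∃ φ : ρ.H, ρ.π a φ ≠ 0) :
    ∃ ρ : StarRep R P A sa, ∀ a : A, (∀ φ : ρ.H, ρ.π a φ = 0) → a = 0 := by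
  classical
  have hsep' : ∀ a : A, ∃ ρ : StarRep R P A sa, a ≠ 0 → ∃ φ : ρ.H, ρ.π a φ ≠ 0 := by
    intro a
    by_cases ha : a = 0
    · exact ⟨trivialRep sa, fun h => absurd ha h⟩
    · obtain ⟨ρ, hφ⟩ := hsep a ha
      exact ⟨ρ, fun _ => hφ⟩
  choose F hF using hsep'
  refine ⟨dsRep F hP, ?_⟩
  intro a haz
  by_contra ha
  obtain ⟨φ₀, hφ₀⟩ := hF a ha
  apply hφ₀
  have h5 : dsPi F a (DirectSum.of (fun i => (F i).H) a φ₀) = 0 :=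
    haz (DirectSum.of (fun i => (F i).H) a φ₀)
  have h4 : dsPi F a (DirectSum.of (fun i => (F i).H) a φ₀) a = 0 := by
    rw [h5]; simp
  rwa [dsPi_apply, DirectSum.of_eq_same] at h4

/-- Statement (1) implies the separation property. -/
theorem one_to_sep (hP : PosCone R P)
    (h1 : ∀ h : A, sa.star h = h → h ≠ 0 →
      ∃ ω : A →ₗ[Cx R] Cx R, sa.IsPositive (CxNonneg P) ω ∧ ω h ≠ 0)
    (a : A) (ha : a ≠ 0) : ∃ ρ : StarRep R P A sa, ∃ φ : ρ.H, ρ.π a φ ≠ 0 := by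
  have key : ∃ ω : A →ₗ[Cx R] Cx R, sa.IsPositive (CxNonneg P) ω ∧ ω a ≠ 0 := by
    by_cases hh : a + sa.star a = 0
    · have hstar : sa.star a = -a := by
        have := hh
        linear_combination (norm := abel) this
      have hsh : sa.star ((Cx.I : Cx R) • a) = (Cx.I : Cx R) • a := by
        rw [sa.star_smul, hstar, show Cx.conj (Cx.I : Cx R) = -(Cx.I : Cx R) by
          ext <;> simp [Cx.conj], neg_smul, smul_neg, neg_neg]
      have hne : (Cx.I : Cx R) • a ≠ 0 := by
        intro h0
        apply ha
        have h2 := congrArg (fun x => (Cx.I : Cx R) • x) h0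
        simp only [smul_smul, Cx.I_mul_I, smul_zero, neg_smul, one_smul,
          neg_eq_zero] at h2
        exact h2
      obtain ⟨ω, hω, hωh⟩ := h1 _ hsh hne
      refine ⟨ω, hω, fun h0 => hωh ?_⟩
      rw [map_smul, h0, smul_zero]
    · have hsh : sa.star (a + sa.star a) = a + sa.star a := by
        rw [sa.star_add, sa.star_star, add_comm]
      obtain ⟨ω, hω, hωh⟩ := h1 _ hsh hh
      refine ⟨ω, hω, fun h0 => hωh ?_⟩
      rw [map_add, h0, omega_star hω, h0, Cx.conj_zero, add_zero]
  obtain ⟨ω, hω, hωa⟩ := key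
  exact ⟨gnsRep hP sa ω hω, gnsRep_faithful_at hP hω hωa⟩

/-- A faithful representation yields sufficiently many positive functionals. -/
theorem faithful_to_one (hP : PosCone R P) (ρ : StarRep R P A sa)
    (hρ : ∀ a : A, (∀ φ : ρ.H, ρ.π a φ = 0) → a = 0)
    (h : A) (hsh : sa.star h = h) (hne : h ≠ 0) :
    ∃ ω : A →ₗ[Cx R] Cx R, sa.IsPositive (CxNonneg P) ω ∧ ω h ≠ 0 := by
  have hψ : ∃ ψ : ρ.H, ρ.π h ψ ≠ 0 := by
    by_contra hc
    push_neg at hc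
    exact hne (hρ h hc)
  obtain ⟨ψ₀, hψ₀⟩ := hψ
  have key : ∃ φ : ρ.H, ρ.hp.inner φ (ρ.π h φ) ≠ 0 := by
    by_contra hdiag
    push_neg at hdiag
    have hx : ∀ φ ψ : ρ.H, ρ.hp.inner φ (ρ.π h ψ) = 0 := by
      intro φ ψ
      set x := ρ.hp.inner φ (ρ.π h ψ) with hxd
      set y := ρ.hp.inner ψ (ρ.π h φ) with hyd
      have e1 : x + y = 0 := by
        have e := hdiag (φ + ψ)
        rw [ρ.map_add, ρ.hp.inner_add_left, ρ.hp.inner_add_right,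
          ρ.hp.inner_add_right, hdiag φ, hdiag ψ] at e
        linear_combination (norm := ring) e
      have e2 : (Cx.I : Cx R) * (x - y) = 0 := by
        have e := hdiag (φ + (Cx.I : Cx R) • ψ)
        rw [ρ.map_add, ρ.map_smul, ρ.hp.inner_add_left, ρ.hp.inner_add_right,
          ρ.hp.inner_add_right, ρ.hp.inner_smul_right, ρ.hp.inner_smul_left,
          ρ.hp.inner_smul_left, ρ.hp.inner_smul_right, hdiag φ, hdiag ψ] at e
        rw [show Cx.conj (Cx.I : Cx R) = -(Cx.I : Cx R) by ext <;> simp [Cx.conj]] at e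
        linear_combination (norm := ring) e
      have exy : x = y := by
        have := Cx.I_mul_eq_zero e2
        linear_combination (norm := ring) this
      have : x + x = 0 := by rw [exy] at e1 ⊢; exact e1
      have hx0 : x = 0 := Cx.two_cancel hP this
      rw [hxd] at hx0
      exact hx0
    have hpos := ρ.hp.inner_pos (ρ.π h ψ₀) hψ₀
    exact CxPos.ne_zero hP hpos (hx (ρ.π h ψ₀) ψ₀)
  obtain ⟨φ₀, hφ₀⟩ := key
  refine ⟨{ toFun := fun a => ρ.hp.inner φ₀ (ρ.π a φ₀)
            map_add' := by
              intro a b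
              simp only [ρ.π_add]
              rw [ρ.hp.inner_add_right]
            map_smul' := by
              intro z a
              simp only [ρ.π_smul]
              rw [ρ.hp.inner_smul_right]
              rfl }, ?_, hφ₀⟩
  intro a
  show ρ.hp.inner φ₀ (ρ.π (sa.star a * a) φ₀) ∈ CxNonneg P
  rw [ρ.π_mul, ← ρ.adjoint]
  by_cases hz : ρ.π a φ₀ = 0
  · rw [hz, ρ.hp.inner_zero_left]
    exact CxNonneg.zero_mem
  · exact CxPos.toNonneg (ρ.hp.inner_pos _ hz)

end Assemble

/-- for a unital `*`-algebra `A` over `C = R[i]`, the following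
are equivalent: (1) `A` has sufficiently many positive linear functionals;
(2) `A` has a faithful `*`-representation on a pre-Hilbert space over `C`;
(3) the intersection of all kernels of `*`-representations of `A` is `{0}`. -/
theorem sufficiently_many_positive_functionals_tfae (R : Type) [CommRing R]
    [Nontrivial R] (P : Set R) (hP : PosCone R P)
    (A : Type) [Ring A] [Algebra (Cx R) A]
    (sa : StarAlgebra (Cx R) Cx.conj A) :
    ((∀ h : A, sa.star h = h → h ≠ 0 →
        ∃ ω : A →ₗ[Cx R] Cx R, sa.IsPositive (CxNonneg P) ω ∧ ω h ≠ 0) ↔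
      (∃ ρ : StarRep R P A sa, ∀ a : A, (∀ φ : ρ.H, ρ.π a φ = 0) → a = 0)) ∧
    ((∃ ρ : StarRep R P A sa, ∀ a : A, (∀ φ : ρ.H, ρ.π a φ = 0) → a = 0) ↔
      (∀ a : A, (∀ ρ : StarRep R P A sa, ∀ φ : ρ.H, ρ.π a φ = 0) → a = 0)) := by
  constructor
  · constructor
    · intro h1
      exact sep_to_faithful hP (one_to_sep hP h1)
    · rintro ⟨ρ, hρ⟩
      exact faithful_to_one hP ρ hρ
  · constructor
    · rintro ⟨ρ, hρ⟩ a ha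
      exact hρ a (ha ρ)
    · intro h3
      refine sep_to_faithful hP ?_
      intro a ha
      by_contra hc
      push_neg at hc
      exact ha (h3 a hc)
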